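/- arXiv:2311.02137 — 2 statements merged into one kernel-verified Lean document; each statement's English description precedes it below -/
import Mathlib

section
/- Let p be an odd prime, G = Sₚ × C₂, and let H' ≤ G be the subgroup generated by the elements (π, 0) for permutations π fixing p−1 and p, together with ((p−1 p), 1). Let τ = (t, 1) ∈ G where t ∈ Sₚ is a product of (p−1)/2 disjoint transpositions and 1 is the nontrivial element of C₂. Then the number of double cosets ⟨τ⟩\G/H' equals (p² − 1)/2. -/
/-- The subgroup `H' ≤ Sₚ × C₂` generated by the elements `(π, 0)` with `π` fixing `a` and `b`,
together with `((a b), 1)`. -/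
def Hprime (p : ℕ) (a b : Fin p) : Subgroup (Equiv.Perm (Fin p) × Multiplicative (ZMod 2)) :=
  Subgroup.closure
    ({g | g.2 = 1 ∧ g.1 a = a ∧ g.1 b = b} ∪ {(Equiv.swap a b, Multiplicative.ofAdd 1)})

namespace DCaux

open Equiv Multiplicative

abbrev GG (p : ℕ) := Equiv.Perm (Fin p) × Multiplicative (ZMod 2)

lemma two_elts (e : Multiplicative (ZMod 2)) : e = 1 ∨ e = ofAdd 1 := by
  revert e; decide

lemma snd_calc (e : Multiplicative (ZMod 2)) :
    (ofAdd 1 * e)⁻¹ * e = ofAdd 1 := by revert e; decide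

lemma ofAdd_ne_one : (ofAdd (1 : ZMod 2)) ≠ 1 := by decide

lemma mem_Hprime {p : ℕ} (a b : Fin p) (g : GG p) :
    g ∈ Hprime p a b ↔
      (g.2 = 1 ∧ g.1 a = a ∧ g.1 b = b) ∨
      (g.2 = ofAdd 1 ∧ g.1 a = b ∧ g.1 b = a) := by
  constructor
  · intro hg
    induction hg using Subgroup.closure_induction with
    | mem x hx =>
      rcases hx with hx | hx
      · exact Or.inl hx
      · rcases Set.mem_singleton_iff.mp hx with rfl
        exact Or.inr ⟨rfl, Equiv.swap_apply_left a b, Equiv.swap_apply_right a b⟩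
    | one => exact Or.inl ⟨rfl, rfl, rfl⟩
    | mul x y hx hy ihx ihy =>
      have h1 : (x * y).1 = x.1 * y.1 := rfl
      have h2 : (x * y).2 = x.2 * y.2 := rfl
      rcases ihx with ⟨he, hxa, hxb⟩ | ⟨he, hxa, hxb⟩ <;>
        rcases ihy with ⟨he', hya, hyb⟩ | ⟨he', hya, hyb⟩
      · exact Or.inl ⟨by rw [h2, he, he', one_mul],
          by rw [h1, Equiv.Perm.mul_apply, hya, hxa],
          by rw [h1, Equiv.Perm.mul_apply, hyb, hxb]⟩
      · exact Or.inr ⟨by rw [h2, he, he', one_mul],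
          by rw [h1, Equiv.Perm.mul_apply, hya, hxb],
          by rw [h1, Equiv.Perm.mul_apply, hyb, hxa]⟩
      · exact Or.inr ⟨by rw [h2, he, he', mul_one],
          by rw [h1, Equiv.Perm.mul_apply, hya, hxa],
          by rw [h1, Equiv.Perm.mul_apply, hyb, hxb]⟩
      · exact Or.inl ⟨by rw [h2, he, he']; decide,
          by rw [h1, Equiv.Perm.mul_apply, hya, hxb],
          by rw [h1, Equiv.Perm.mul_apply, hyb, hxa]⟩
    | inv x hx ihx =>
      have h1 : (x⁻¹).1 = x.1⁻¹ := rfl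
      have h2 : (x⁻¹).2 = x.2⁻¹ := rfl
      rcases ihx with ⟨he, hxa, hxb⟩ | ⟨he, hxa, hxb⟩
      · exact Or.inl ⟨by rw [h2, he, inv_one],
          by rw [h1, Equiv.Perm.inv_eq_iff_eq, hxa],
          by rw [h1, Equiv.Perm.inv_eq_iff_eq, hxb]⟩
      · exact Or.inr ⟨by rw [h2, he]; decide,
          by rw [h1, Equiv.Perm.inv_eq_iff_eq, hxb],
          by rw [h1, Equiv.Perm.inv_eq_iff_eq, hxa]⟩
  · rintro (h | ⟨he, hga, hgb⟩)
    · exact Subgroup.subset_closure (Or.inl h)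
    · have key : g = (g.1 * Equiv.swap a b, 1) * (Equiv.swap a b, ofAdd 1) := by
        apply Prod.ext
        · show g.1 = g.1 * Equiv.swap a b * Equiv.swap a b
          rw [mul_assoc, Equiv.swap_mul_self, mul_one]
        · show g.2 = 1 * ofAdd 1
          rw [one_mul, he]
      rw [key]
      refine mul_mem (Subgroup.subset_closure (Or.inl ⟨rfl, ?_, ?_⟩))
        (Subgroup.subset_closure (Or.inr rfl))
      · show g.1 (Equiv.swap a b a) = a
        rw [Equiv.swap_apply_left, hgb]
      · show g.1 (Equiv.swap a b b) = b
        rw [Equiv.swap_apply_right, hga]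

/-- The invariant of a coset. -/
def psi {p : ℕ} (a b : Fin p) (g : GG p) : Fin p × Fin p :=
  if g.2 = 1 then (g.1 a, g.1 b) else (g.1 b, g.1 a)

lemma psi_mul_mem {p : ℕ} (a b : Fin p) (g h : GG p) (hh : h ∈ Hprime p a b) :
    psi a b (g * h) = psi a b g := by
  have h1 : (g * h).1 = g.1 * h.1 := rfl
  have h2 : (g * h).2 = g.2 * h.2 := rfl
  rcases (mem_Hprime a b h).mp hh with ⟨he, hha, hhb⟩ | ⟨he, hha, hhb⟩
  · unfold psi
    rw [h1, h2, he, mul_one]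
    simp only [Equiv.Perm.mul_apply, hha, hhb]
  · unfold psi
    rw [h1, h2, he]
    rcases two_elts g.2 with hg2 | hg2 <;> rw [hg2]
    · rw [if_neg (by decide), if_pos rfl]
      simp only [Equiv.Perm.mul_apply, hha, hhb]
    · rw [if_pos (by decide), if_neg (by decide)]
      simp only [Equiv.Perm.mul_apply, hha, hhb]

lemma psi_eq_mem {p : ℕ} (a b : Fin p) (g g' : GG p) (h : psi a b g = psi a b g') :
    g⁻¹ * g' ∈ Hprime p a b := by
  have h1 : (g⁻¹ * g').1 = g.1⁻¹ * g'.1 := rfl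
  have h2 : (g⁻¹ * g').2 = g.2⁻¹ * g'.2 := rfl
  rw [mem_Hprime]
  unfold psi at h
  rcases two_elts g.2 with hg2 | hg2 <;> rcases two_elts g'.2 with hg2' | hg2' <;>
      rw [hg2, hg2'] at h
  · rw [if_pos rfl, if_pos rfl] at h
    injection h with ha' hb'
    refine Or.inl ⟨by rw [h2, hg2, hg2', inv_one, one_mul], ?_, ?_⟩
    · rw [h1, Equiv.Perm.mul_apply, ← ha', Equiv.Perm.inv_eq_iff_eq]
    · rw [h1, Equiv.Perm.mul_apply, ← hb', Equiv.Perm.inv_eq_iff_eq]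
  · rw [if_pos rfl, if_neg (by decide)] at h
    injection h with ha' hb'
    refine Or.inr ⟨by rw [h2, hg2, hg2', inv_one, one_mul], ?_, ?_⟩
    · rw [h1, Equiv.Perm.mul_apply, ← hb', Equiv.Perm.inv_eq_iff_eq]
    · rw [h1, Equiv.Perm.mul_apply, ← ha', Equiv.Perm.inv_eq_iff_eq]
  · rw [if_neg (by decide), if_pos rfl] at h
    injection h with ha' hb'
    refine Or.inr ⟨by rw [h2, hg2, hg2']; decide, ?_, ?_⟩
    · rw [h1, Equiv.Perm.mul_apply, ← ha', Equiv.Perm.inv_eq_iff_eq]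
    · rw [h1, Equiv.Perm.mul_apply, ← hb', Equiv.Perm.inv_eq_iff_eq]
  · rw [if_neg (by decide), if_neg (by decide)] at h
    injection h with ha' hb'
    refine Or.inl ⟨by rw [h2, hg2, hg2']; decide, ?_, ?_⟩
    · rw [h1, Equiv.Perm.mul_apply, ← hb', Equiv.Perm.inv_eq_iff_eq]
    · rw [h1, Equiv.Perm.mul_apply, ← ha', Equiv.Perm.inv_eq_iff_eq]

lemma exists_perm {p : ℕ} (a b x y : Fin p) (hab : a ≠ b) (hxy : x ≠ y) :
    ∃ s : Equiv.Perm (Fin p), s a = x ∧ s b = y := by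
  refine ⟨Equiv.swap (Equiv.swap a x b) y * Equiv.swap a x, ?_, ?_⟩
  · rw [Equiv.Perm.mul_apply, Equiv.swap_apply_left]
    refine Equiv.swap_apply_of_ne_of_ne ?_ hxy
    intro hc
    exact hab (Equiv.injective (Equiv.swap a x) (by rw [Equiv.swap_apply_left]; exact hc.symm)).symm
  · rw [Equiv.Perm.mul_apply, Equiv.swap_apply_left]

/-- `psi` descends to the coset space. -/
def psibar {p : ℕ} (a b : Fin p) : (GG p ⧸ Hprime p a b) → Fin p × Fin p :=
  fun q => Quotient.liftOn' q (psi a b) (by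
    intro g g' hgg'
    have hm : g⁻¹ * g' ∈ Hprime p a b := QuotientGroup.leftRel_apply.mp hgg'
    have hgg : g' = g * (g⁻¹ * g') := by group
    rw [hgg, psi_mul_mem a b g _ hm])

lemma psibar_mk {p : ℕ} (a b : Fin p) (g : GG p) :
    psibar a b (QuotientGroup.mk g) = psi a b g := rfl

lemma psibar_inj {p : ℕ} (a b : Fin p) : Function.Injective (psibar a b) := by
  intro q q'
  induction q, q' using Quotient.inductionOn₂' with
  | h g g' =>
    intro h
    exact Quotient.sound' (QuotientGroup.leftRel_apply.mpr (psi_eq_mem a b g g' h))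

end DCaux

open DCaux Equiv Multiplicative

/-- For `τ = (t, 1) ∈ G = Sₚ × C₂` with `t` a product of `(p−1)/2` disjoint transpositions
and `1` the nontrivial element of `C₂`, the number of double cosets `⟨τ⟩\G/H'` is `(p² − 1)/2`. -/
theorem double_coset_count_big (p : ℕ) (hp : p.Prime) (hodd : Odd p)
    (a b : Fin p) (ha : (a : ℕ) = p - 2) (hb : (b : ℕ) = p - 1)
    (t : Equiv.Perm (Fin p))
    (ht : t.cycleType = Multiset.replicate ((p - 1) / 2) 2) :
    Nat.card (DoubleCoset.Quotient
        ((Subgroup.zpowers ((t, Multiplicative.ofAdd 1) :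
            Equiv.Perm (Fin p) × Multiplicative (ZMod 2)) :
          Subgroup (Equiv.Perm (Fin p) × Multiplicative (ZMod 2))) :
            Set (Equiv.Perm (Fin p) × Multiplicative (ZMod 2)))
        ((Hprime p a b : Subgroup (Equiv.Perm (Fin p) × Multiplicative (ZMod 2))) :
            Set (Equiv.Perm (Fin p) × Multiplicative (ZMod 2))))
      = (p ^ 2 - 1) / 2 := by
  classical
  have hp3 : 3 ≤ p := by
    rcases hodd with ⟨k, hk⟩
    have := hp.two_le
    omega
  have hab : a ≠ b := by
    intro h
    rw [h, hb] at ha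
    omega
  have ht2 : t ^ 2 = 1 := by
    rw [← orderOf_dvd_iff_pow_eq_one, ← Equiv.Perm.lcm_cycleType, ht]
    exact Multiset.lcm_dvd.mpr (fun x hx => by rw [Multiset.eq_of_mem_replicate hx])
  have htmul : t * t = 1 := by rw [← sq]; exact ht2
  have htt : ∀ x, t (t x) = x := by
    intro x
    calc t (t x) = (t * t) x := rfl
    _ = x := by rw [htmul]; rfl
  have htinv : t⁻¹ = t := inv_eq_of_mul_eq_one_right htmul
  set τ : GG p := ((t, ofAdd 1) : GG p) with hτ
  have hτ2 : τ ^ 2 = 1 := by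
    apply Prod.ext
    · exact ht2
    · show (ofAdd (1 : ZMod 2)) ^ 2 = 1
      decide
  have hτne : τ ≠ 1 := fun h => ofAdd_ne_one (congrArg Prod.snd h)
  haveI : Fact (Nat.Prime 2) := ⟨Nat.prime_two⟩
  have hτord : orderOf τ = 2 := orderOf_eq_prime hτ2 hτne
  set A : Subgroup (GG p) := Subgroup.zpowers τ with hA
  set B : Subgroup (GG p) := Hprime p a b with hB
  have cardA : Nat.card A = 2 := by rw [hA, Nat.card_zpowers, hτord]
  set τ' : A := ⟨τ, Subgroup.mem_zpowers τ⟩ with hτ'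
  -- characterization of fixed cosets
  have fixed_iff : ∀ g : GG p, (τ • (QuotientGroup.mk g : (GG p ⧸ B)) = QuotientGroup.mk g) ↔
      (t (g.1 a) = g.1 b ∧ t (g.1 b) = g.1 a) := by
    intro g
    rw [MulAction.Quotient.smul_mk, smul_eq_mul, QuotientGroup.eq]
    have hprod : (τ * g)⁻¹ * g = ((g.1⁻¹ * (t * g.1), (ofAdd 1 : Multiplicative (ZMod 2))) : GG p) := by
      apply Prod.ext
      · show (t * g.1)⁻¹ * g.1 = g.1⁻¹ * (t * g.1)
        rw [mul_inv_rev, htinv, mul_assoc]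
      · exact snd_calc g.2
    rw [hprod, hB, mem_Hprime]
    constructor
    · rintro (⟨he, -, -⟩ | ⟨-, hA1, hB1⟩)
      · exact absurd he ofAdd_ne_one
      · constructor
        · have := hA1
          simp only [Equiv.Perm.mul_apply] at this
          rwa [Equiv.Perm.inv_eq_iff_eq] at this
        · have := hB1
          simp only [Equiv.Perm.mul_apply] at this
          rwa [Equiv.Perm.inv_eq_iff_eq] at this
    · rintro ⟨h1, h2⟩
      refine Or.inr ⟨rfl, ?_, ?_⟩
      · simp only [Equiv.Perm.mul_apply]
        rw [Equiv.Perm.inv_eq_iff_eq, h1]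
      · simp only [Equiv.Perm.mul_apply]
        rw [Equiv.Perm.inv_eq_iff_eq, h2]
  -- cardinality of (GG p ⧸ B)
  have hne' : ∀ q : (GG p ⧸ B), (psibar a b q).1 ≠ (psibar a b q).2 := by
    intro q
    induction q using Quotient.inductionOn' with
    | h g =>
      show (psi a b g).1 ≠ (psi a b g).2
      unfold psi
      rcases two_elts g.2 with h | h <;> rw [h]
      · rw [if_pos rfl]
        exact fun hc => hab (g.1.injective hc)
      · rw [if_neg (by decide)]
        exact fun hc => hab (g.1.injective hc).symm
  have hsurj : ∀ z : Fin p × Fin p, z.1 ≠ z.2 → ∃ q : (GG p ⧸ B), psibar a b q = z := by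
    rintro ⟨x, y⟩ hxy
    obtain ⟨s, hsa, hsb⟩ := exists_perm a b x y hab hxy
    refine ⟨QuotientGroup.mk ((s, 1) : GG p), ?_⟩
    show psi a b ((s, 1) : GG p) = (x, y)
    unfold psi
    rw [if_pos rfl]
    simp [hsa, hsb]
  have eX : (GG p ⧸ B) ≃ {z : Fin p × Fin p // z.1 ≠ z.2} :=
    Equiv.ofBijective (fun q => ⟨psibar a b q, hne' q⟩)
      ⟨fun q q' h => psibar_inj a b (congrArg Subtype.val h),
       fun z => by
        obtain ⟨q, hq⟩ := hsurj z.1 z.2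
        exact ⟨q, Subtype.ext hq⟩⟩
  have diagEquiv : {z : Fin p × Fin p // z.1 = z.2} ≃ Fin p :=
    { toFun := fun z => z.1.1
      invFun := fun x => ⟨(x, x), rfl⟩
      left_inv := by
        rintro ⟨⟨x, y⟩, h⟩
        have h' : x = y := h
        subst h'
        rfl
      right_inv := fun x => rfl }
  have cardX : Nat.card (GG p ⧸ B) = p * p - p := by
    rw [Nat.card_congr eX, Nat.card_eq_fintype_card]
    have hcompl : Fintype.card {z : Fin p × Fin p // z.1 ≠ z.2}
        = Fintype.card (Fin p × Fin p) - Fintype.card {z : Fin p × Fin p // z.1 = z.2} :=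
      Fintype.card_subtype_compl _
    rw [hcompl, Fintype.card_congr diagEquiv, Fintype.card_prod, Fintype.card_fin]
  -- fixed points
  have cardMoved : Nat.card {x : Fin p // t x ≠ x} = p - 1 := by
    have h1 : Nat.card {x : Fin p // t x ≠ x} = t.support.card := by
      rw [Nat.card_eq_fintype_card, ← Fintype.card_coe]
      exact Fintype.card_congr (Equiv.subtypeEquivRight (fun x => Equiv.Perm.mem_support.symm))
    have h2 := t.sum_cycleType
    rw [ht, Multiset.sum_replicate, smul_eq_mul] at h2
    rcases hodd with ⟨k, hk⟩
    omega
  have key1 : ∀ q : (GG p ⧸ B), τ • q = q →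
      t (psibar a b q).1 ≠ (psibar a b q).1 ∧ (psibar a b q).2 = t (psibar a b q).1 := by
    intro q
    induction q using Quotient.inductionOn' with
    | h g =>
      intro hq
      have hfix := (fixed_iff g).mp hq
      show t (psi a b g).1 ≠ (psi a b g).1 ∧ (psi a b g).2 = t (psi a b g).1
      unfold psi
      rcases two_elts g.2 with h | h <;> rw [h]
      · rw [if_pos rfl]
        refine ⟨?_, hfix.1.symm⟩
        rw [hfix.1]
        exact fun hc => hab (g.1.injective hc).symm
      · rw [if_neg (by decide)]
        refine ⟨?_, hfix.2.symm⟩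
        rw [hfix.2]
        exact fun hc => hab (g.1.injective hc)
  have key2 : ∀ x : Fin p, t x ≠ x → ∃ q : (GG p ⧸ B), (τ • q = q) ∧ (psibar a b q).1 = x := by
    intro x hx
    obtain ⟨s, hsa, hsb⟩ := exists_perm a b x (t x) hab (Ne.symm hx)
    refine ⟨QuotientGroup.mk ((s, 1) : GG p), ?_, ?_⟩
    · refine (fixed_iff ((s, 1) : GG p)).mpr ⟨?_, ?_⟩
      · show t (s a) = s b
        rw [hsa, hsb]
      · show t (s b) = s a
        rw [hsb, htt, hsa]
    · show (psi a b ((s, 1) : GG p)).1 = x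
      unfold psi
      rw [if_pos rfl]
      exact hsa
  have cardFix : Nat.card {q : (GG p ⧸ B) // τ • q = q} = p - 1 := by
    rw [← cardMoved]
    apply Nat.card_congr
    refine Equiv.ofBijective (fun q => ⟨(psibar a b q.1).1, (key1 q.1 q.2).1⟩) ⟨?_, ?_⟩
    · rintro ⟨q, hq⟩ ⟨q', hq'⟩ h
      have hx : (psibar a b q).1 = (psibar a b q').1 := congrArg Subtype.val h
      have hfull : psibar a b q = psibar a b q' := by
        apply Prod.ext
        · exact hx
        · rw [(key1 q hq).2, (key1 q' hq').2, hx]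
      exact Subtype.ext (psibar_inj a b hfull)
    · rintro ⟨x, hx⟩
      obtain ⟨q, hq, hval⟩ := key2 x hx
      exact ⟨⟨q, hq⟩, Subtype.ext hval⟩
  -- Burnside
  haveI : Fintype (GG p ⧸ B) := Fintype.ofFinite (GG p ⧸ B)
  haveI : Fintype A := Fintype.ofFinite A
  haveI : ∀ u : A, Fintype (MulAction.fixedBy (GG p ⧸ B) u) := fun u => Fintype.ofFinite _
  haveI : Fintype (Quotient (MulAction.orbitRel A (GG p ⧸ B))) := Fintype.ofFinite _
  have burnside := MulAction.sum_card_fixedBy_eq_card_orbits_mul_card_group A (GG p ⧸ B)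
  have hτ'ne : (1 : A) ≠ τ' := fun h => hτne (congrArg Subtype.val h).symm
  have huniv : (Finset.univ : Finset A) = {1, τ'} := by
    symm
    apply Finset.eq_univ_of_card
    have hc : ({1, τ'} : Finset A).card = 2 := by
      rw [Finset.card_insert_of_notMem (by simpa using hτ'ne), Finset.card_singleton]
    rw [hc, ← Nat.card_eq_fintype_card, cardA]
  rw [huniv, Finset.sum_insert (by simpa using hτ'ne), Finset.sum_singleton] at burnside
  have hfix1 : Fintype.card (MulAction.fixedBy (GG p ⧸ B) (1 : A)) = Nat.card (GG p ⧸ B) := by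
    rw [← Nat.card_eq_fintype_card]
    have huniv1 : MulAction.fixedBy (GG p ⧸ B) (1 : A) = Set.univ := by
      ext q
      simp [MulAction.mem_fixedBy]
    rw [huniv1]
    exact Nat.card_congr (Equiv.Set.univ (GG p ⧸ B))
  have hfixτ : Fintype.card (MulAction.fixedBy (GG p ⧸ B) τ') = p - 1 := by
    rw [← Nat.card_eq_fintype_card, ← cardFix]
    apply Nat.card_congr
    exact Equiv.subtypeEquivRight (fun q => by
      rw [MulAction.mem_fixedBy]; exact Iff.rfl)
  have hcardA2 : Fintype.card A = 2 := by rw [← Nat.card_eq_fintype_card, cardA]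
  rw [hfix1, hfixτ, hcardA2, cardX] at burnside
  -- identify the double coset space with the orbit space
  have hdos : Nat.card (DoubleCoset.Quotient (A : Set (GG p)) (B : Set (GG p)))
      = Fintype.card (Quotient (MulAction.orbitRel A (GG p ⧸ B))) := by
    rw [← Nat.card_eq_fintype_card]
    apply Nat.card_congr
    have sound : ∀ g g' : GG p, (DoubleCoset.setoid (A : Set (GG p)) (B : Set (GG p))) g g' →
        (MulAction.orbitRel A (GG p ⧸ B)) (QuotientGroup.mk g : (GG p ⧸ B)) (QuotientGroup.mk g') := by
      intro g g' hgg'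
      obtain ⟨u, hu, v, hv, huv⟩ := DoubleCoset.rel_iff.mp hgg'
      show (QuotientGroup.mk g : (GG p ⧸ B)) ∈ MulAction.orbit A (QuotientGroup.mk g')
      rw [MulAction.mem_orbit_iff]
      refine ⟨(⟨u, hu⟩ : A)⁻¹, ?_⟩
      have hmk : (QuotientGroup.mk g' : (GG p ⧸ B)) = (⟨u, hu⟩ : A) • (QuotientGroup.mk g : (GG p ⧸ B)) := by
        show _ = u • (QuotientGroup.mk g : (GG p ⧸ B))
        rw [MulAction.Quotient.smul_mk, smul_eq_mul, huv, QuotientGroup.eq]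
        have hv' : (u * g * v)⁻¹ * (u * g) = v⁻¹ := by group
        rw [hv']
        exact inv_mem hv
      rw [hmk, inv_smul_smul]
    refine Equiv.ofBijective (Quotient.map' (fun g => (QuotientGroup.mk g : (GG p ⧸ B))) sound) ⟨?_, ?_⟩
    · intro q q'
      induction q, q' using Quotient.inductionOn₂' with
      | h g g' =>
        intro h
        rw [Quotient.map'_mk'', Quotient.map'_mk''] at h
        have horb := Quotient.exact' h
        rw [MulAction.orbitRel_apply, MulAction.mem_orbit_iff] at horb
        obtain ⟨u, hu⟩ := horb
        change (u : GG p) • (QuotientGroup.mk g' : (GG p ⧸ B)) = _ at hu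
        rw [MulAction.Quotient.smul_mk, smul_eq_mul] at hu
        have hk : ((u : GG p) * g')⁻¹ * g ∈ B := QuotientGroup.eq.mp hu
        apply Quotient.sound'
        apply Setoid.symm'
        apply DoubleCoset.rel_iff.mpr
        exact ⟨u, u.2, _, hk, by group⟩
    · intro ω
      induction ω using Quotient.inductionOn' with
      | h x =>
        induction x using Quotient.inductionOn' with
        | h g =>
          exact ⟨Quotient.mk'' g, by rw [Quotient.map'_mk'']⟩
  rw [hdos]
  obtain ⟨m, hm⟩ : ∃ m, p * p = m := ⟨_, rfl⟩
  have hsq : p ^ 2 = m := by rw [pow_two, hm]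
  have hpp : 2 * p ≤ m := by rw [← hm]; exact Nat.mul_le_mul_right p (by omega)
  rw [hm] at burnside
  rw [hsq]
  omega
end

section
/- Let p be an odd prime, G = Sₚ × C₂, and let H' ≤ G be the subgroup generated by the elements (π, 0) for permutations π fixing p−1 and p, together with ((p−1 p), 1). Let A₁ = Sₚ × {0}, A₂ = Stab(1) × C₂ and A₃ = Stab(1) × {0}, where Stab(1) = {ρ ∈ Sₚ : ρ(1) = 1}. Then the numbers of double cosets are: #(A₁\G/H') = 1, #(A₂\G/H') = 2, and #(A₃\G/H') = 3. -/
lemma two_cases (u : Multiplicative (ZMod 2)) : u = 1 ∨ u = Multiplicative.ofAdd 1 := by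
  revert u; decide

lemma ofAdd_ne_one : (Multiplicative.ofAdd (1 : ZMod 2)) ≠ 1 := by decide

lemma ofAdd_mul_ofAdd :
    (Multiplicative.ofAdd (1 : ZMod 2)) * Multiplicative.ofAdd (1 : ZMod 2) = 1 := by decide

/-- The explicit description of `Hprime` as a subgroup. -/
def Kgrp (p : ℕ) (a b : Fin p) : Subgroup (Equiv.Perm (Fin p) × Multiplicative (ZMod 2)) where
  carrier := {g | (g.2 = 1 ∧ g.1 a = a ∧ g.1 b = b) ∨
    (g.2 = Multiplicative.ofAdd 1 ∧ g.1 a = b ∧ g.1 b = a)}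
  one_mem' := Or.inl ⟨rfl, rfl, rfl⟩
  mul_mem' := by
    rintro x y (⟨h1, h2, h3⟩ | ⟨h1, h2, h3⟩) (⟨g1, g2, g3⟩ | ⟨g1, g2, g3⟩) <;>
      simp only [Set.mem_setOf_eq, Prod.fst_mul, Prod.snd_mul, Equiv.Perm.mul_apply,
        h1, g1, g2, g3, h2, h3, one_mul, mul_one]
    · exact Or.inl ⟨by trivial, by trivial, by trivial⟩
    · exact Or.inr ⟨by trivial, by trivial, by trivial⟩
    · exact Or.inr ⟨by trivial, by trivial, by trivial⟩
    · exact Or.inl ⟨ofAdd_mul_ofAdd, by trivial, by trivial⟩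
  inv_mem' := by
    rintro x (⟨h1, h2, h3⟩ | ⟨h1, h2, h3⟩) <;>
      simp only [Set.mem_setOf_eq, Prod.fst_inv, Prod.snd_inv, h1, inv_one]
    · exact Or.inl ⟨by trivial, Equiv.Perm.inv_eq_iff_eq.mpr h2.symm,
        Equiv.Perm.inv_eq_iff_eq.mpr h3.symm⟩
    · exact Or.inr ⟨by decide, Equiv.Perm.inv_eq_iff_eq.mpr h3.symm,
        Equiv.Perm.inv_eq_iff_eq.mpr h2.symm⟩

lemma Hprime_eq (p : ℕ) (a b : Fin p) : Hprime p a b = Kgrp p a b := by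
  apply le_antisymm
  · rw [Hprime, Subgroup.closure_le]
    rintro g (⟨h1, h2, h3⟩ | hg)
    · exact Or.inl ⟨h1, h2, h3⟩
    · rw [Set.mem_singleton_iff] at hg
      subst hg
      exact Or.inr ⟨rfl, Equiv.swap_apply_left a b, Equiv.swap_apply_right a b⟩
  · rintro g (⟨h1, h2, h3⟩ | ⟨h1, h2, h3⟩)
    · exact Subgroup.subset_closure (Or.inl ⟨h1, h2, h3⟩)
    · have hg : g = (g.1 * Equiv.swap a b, 1) * (Equiv.swap a b, Multiplicative.ofAdd 1) := by
        refine Prod.ext ?_ ?_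
        · simp [mul_assoc, Equiv.swap_mul_self]
        · simp [h1]
      rw [hg]
      refine mul_mem (Subgroup.subset_closure (Or.inl ⟨rfl, ?_, ?_⟩))
        (Subgroup.subset_closure (Or.inr rfl))
      · simp [Equiv.swap_apply_left, h3]
      · simp [Equiv.swap_apply_right, h2]

abbrev Gp (p : ℕ) := Equiv.Perm (Fin p) × Multiplicative (ZMod 2)

lemma mem_Hprime {p : ℕ} {a b : Fin p} {g : Gp p} :
    g ∈ Hprime p a b ↔ (g.2 = 1 ∧ g.1 a = a ∧ g.1 b = b) ∨
      (g.2 = Multiplicative.ofAdd 1 ∧ g.1 a = b ∧ g.1 b = a) := by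
  rw [Hprime_eq]; exact Iff.rfl

/-- classifier for the third count -/
def d3 {p : ℕ} (a b : Fin p) (w : Fin p) (u : Multiplicative (ZMod 2)) : Fin 3 :=
  if w = a then (if u = 1 then 1 else 2) else if w = b then (if u = 1 then 2 else 1) else 0

/-- classifier for the second count -/
def d2 {p : ℕ} (a b : Fin p) (w : Fin p) : Fin 2 :=
  if w = a ∨ w = b then 1 else 0

lemma d3_inv {p : ℕ} {a b : Fin p} (hab : a ≠ b) (w : Fin p) (u : Multiplicative (ZMod 2))
    {k : Gp p} (hk : k ∈ Hprime p a b) :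
    d3 a b (k.1⁻¹ w) (u * k.2) = d3 a b w u := by
  rcases mem_Hprime.1 hk with ⟨k2, ka, kb⟩ | ⟨k2, ka, kb⟩ <;>
    rcases two_cases u with rfl | rfl <;>
      by_cases hwa : w = a <;> by_cases hwb : w = b <;>
        simp_all [d3, Equiv.Perm.inv_eq_iff_eq, Equiv.symm_apply_eq, ofAdd_ne_one, ofAdd_mul_ofAdd]

lemma d2_inv {p : ℕ} {a b : Fin p} (hab : a ≠ b) (w : Fin p)
    {k : Gp p} (hk : k ∈ Hprime p a b) :
    d2 a b (k.1⁻¹ w) = d2 a b w := by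
  rcases mem_Hprime.1 hk with ⟨k2, ka, kb⟩ | ⟨k2, ka, kb⟩ <;>
    by_cases hwa : w = a <;> by_cases hwb : w = b <;>
      simp_all [d2, Equiv.Perm.inv_eq_iff_eq, Equiv.symm_apply_eq]

lemma merge {p : ℕ} (a b z : Fin p) (B : Subgroup (Multiplicative (ZMod 2)))
    (r g k : Gp p) (hk : k ∈ Hprime p a b)
    (h1 : k.1 (g.1⁻¹ z) = r.1⁻¹ z) (h2 : g.2 * k.2⁻¹ * r.2⁻¹ ∈ B) :
    DoubleCoset.mk ((MulAction.stabilizer (Equiv.Perm (Fin p)) z).prod B) (Hprime p a b) r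
      = DoubleCoset.mk ((MulAction.stabilizer (Equiv.Perm (Fin p)) z).prod B) (Hprime p a b) g := by
  rw [DoubleCoset.eq]
  refine ⟨g * k⁻¹ * r⁻¹, ?_, k, hk, by group⟩
  rw [Subgroup.mem_prod]
  constructor
  · rw [MulAction.mem_stabilizer_iff]
    show (g * k⁻¹ * r⁻¹).1 z = z
    have : (g * k⁻¹ * r⁻¹).1 z = g.1 (k.1⁻¹ (r.1⁻¹ z)) := rfl
    rw [this, ← h1]; simp
  · exact h2

def r3 {p : ℕ} (z a : Fin p) : Fin 3 → Gp p := fun i =>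
  if i = 0 then (1, 1) else if i = 1 then (Equiv.swap z a, 1)
  else (Equiv.swap z a, Multiplicative.ofAdd 1)

def r2 {p : ℕ} (z a : Fin p) : Fin 2 → Gp p := fun i =>
  if i = 0 then (1, 1) else (Equiv.swap z a, 1)

@[simp] lemma r3_zero {p : ℕ} (z a : Fin p) : r3 z a 0 = (1, 1) := rfl
@[simp] lemma r3_one {p : ℕ} (z a : Fin p) : r3 z a 1 = (Equiv.swap z a, 1) := rfl
@[simp] lemma r3_two {p : ℕ} (z a : Fin p) :
    r3 z a 2 = (Equiv.swap z a, Multiplicative.ofAdd 1) := rfl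
@[simp] lemma r2_zero {p : ℕ} (z a : Fin p) : r2 z a 0 = (1, 1) := rfl
@[simp] lemma r2_one {p : ℕ} (z a : Fin p) : r2 z a 1 = (Equiv.swap z a, 1) := rfl

lemma mk_rep3 {p : ℕ} {a b z : Fin p} (hab : a ≠ b) (haz : a ≠ z) (hbz : b ≠ z) (g : Gp p) :
    DoubleCoset.mk ((MulAction.stabilizer (Equiv.Perm (Fin p)) z).prod ⊥) (Hprime p a b)
        (r3 z a (d3 a b (g.1⁻¹ z) g.2))
      = DoubleCoset.mk ((MulAction.stabilizer (Equiv.Perm (Fin p)) z).prod ⊥) (Hprime p a b) g := by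
  rcases two_cases g.2 with hu | hu <;> by_cases hwa : g.1⁻¹ z = a <;> by_cases hwb : g.1⁻¹ z = b
  · exact absurd (hwa.symm.trans hwb) hab
  · -- u = 1, w = a : class 1, k = 1
    have hd : d3 a b (g.1⁻¹ z) g.2 = 1 := by simp [d3, hwa, hu]
    rw [hd]
    refine merge a b z ⊥ _ g (1, 1) (one_mem _) ?_ ?_
    · simp [r3, hwa]
    · simp [hu]
  · -- u = 1, w = b : class 2, k = (swap a b, ofAdd 1)
    have hd : d3 a b (g.1⁻¹ z) g.2 = 2 := by simp [d3, hwa, hwb, hu, Ne.symm hab]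
    rw [hd]
    refine merge a b z ⊥ _ g (Equiv.swap a b, Multiplicative.ofAdd 1)
      (mem_Hprime.2 (Or.inr ⟨rfl, Equiv.swap_apply_left a b, Equiv.swap_apply_right a b⟩)) ?_ ?_
    · simp [r3, hwb]
    · rw [Subgroup.mem_bot, hu]; simp; decide
  · -- u = 1, w ∉ {a,b} : class 0, k = (swap w z, 1)
    have hd : d3 a b (g.1⁻¹ z) g.2 = 0 := by simp only [d3, hwa, hwb, ↓reduceIte]
    rw [hd]
    refine merge a b z ⊥ _ g (Equiv.swap (g.1⁻¹ z) z, 1)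
      (mem_Hprime.2 (Or.inl ⟨rfl, ?_, ?_⟩)) ?_ ?_
    · exact Equiv.swap_apply_of_ne_of_ne (fun h => hwa h.symm) haz
    · exact Equiv.swap_apply_of_ne_of_ne (fun h => hwb h.symm) hbz
    · simp [r3]
    · simp [hu]
  · exact absurd (hwa.symm.trans hwb) hab
  · -- u = ofAdd 1, w = a : class 2, k = 1
    have hd : d3 a b (g.1⁻¹ z) g.2 = 2 := by simp [d3, hwa, hu, ofAdd_ne_one]
    rw [hd]
    refine merge a b z ⊥ _ g (1, 1) (one_mem _) ?_ ?_
    · simp [r3, hwa]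
    · rw [Subgroup.mem_bot, hu]; simp
  · -- u = ofAdd 1, w = b : class 1, k = (swap a b, ofAdd 1)
    have hd : d3 a b (g.1⁻¹ z) g.2 = 1 := by simp [d3, hwa, hwb, hu, ofAdd_ne_one, Ne.symm hab]
    rw [hd]
    refine merge a b z ⊥ _ g (Equiv.swap a b, Multiplicative.ofAdd 1)
      (mem_Hprime.2 (Or.inr ⟨rfl, Equiv.swap_apply_left a b, Equiv.swap_apply_right a b⟩)) ?_ ?_
    · simp [r3, hwb]
    · rw [Subgroup.mem_bot, hu]; simp
  · -- u = ofAdd 1, w ∉ {a,b} : class 0, k = (swap a b * swap w z, ofAdd 1)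
    have hd : d3 a b (g.1⁻¹ z) g.2 = 0 := by simp only [d3, hwa, hwb, ↓reduceIte]
    rw [hd]
    refine merge a b z ⊥ _ g (Equiv.swap a b * Equiv.swap (g.1⁻¹ z) z, Multiplicative.ofAdd 1)
      (mem_Hprime.2 (Or.inr ⟨rfl, ?_, ?_⟩)) ?_ ?_
    · show Equiv.swap a b (Equiv.swap (g.1⁻¹ z) z a) = b
      rw [Equiv.swap_apply_of_ne_of_ne (fun h => hwa h.symm) haz, Equiv.swap_apply_left]
    · show Equiv.swap a b (Equiv.swap (g.1⁻¹ z) z b) = a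
      rw [Equiv.swap_apply_of_ne_of_ne (fun h => hwb h.symm) hbz, Equiv.swap_apply_right]
    · show Equiv.swap a b (Equiv.swap (g.1⁻¹ z) z (g.1⁻¹ z)) = (r3 z a 0).1⁻¹ z
      rw [Equiv.swap_apply_left, Equiv.swap_apply_of_ne_of_ne haz.symm hbz.symm]
      simp [r3]
    · rw [Subgroup.mem_bot, hu]; simp

lemma mk_rep2 {p : ℕ} {a b z : Fin p} (hab : a ≠ b) (haz : a ≠ z) (hbz : b ≠ z) (g : Gp p) :
    DoubleCoset.mk ((MulAction.stabilizer (Equiv.Perm (Fin p)) z).prod ⊤) (Hprime p a b)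
        (r2 z a (d2 a b (g.1⁻¹ z)))
      = DoubleCoset.mk ((MulAction.stabilizer (Equiv.Perm (Fin p)) z).prod ⊤) (Hprime p a b) g := by
  by_cases hwa : g.1⁻¹ z = a <;> by_cases hwb : g.1⁻¹ z = b
  · exact absurd (hwa.symm.trans hwb) hab
  · -- w = a, k = 1
    have hd : d2 a b (g.1⁻¹ z) = 1 := by simp [d2, hwa]
    rw [hd]
    refine merge a b z ⊤ _ g (1, 1) (one_mem _) ?_ (Subgroup.mem_top _)
    · simp [r2, hwa]
  · -- w = b, k = (swap a b, ofAdd 1)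
    have hd : d2 a b (g.1⁻¹ z) = 1 := by simp [d2, hwb]
    rw [hd]
    refine merge a b z ⊤ _ g (Equiv.swap a b, Multiplicative.ofAdd 1)
      (mem_Hprime.2 (Or.inr ⟨rfl, Equiv.swap_apply_left a b, Equiv.swap_apply_right a b⟩)) ?_
      (Subgroup.mem_top _)
    · simp [r2, hwb]
  · -- w ∉ {a,b}, k = (swap w z, 1)
    have hd : d2 a b (g.1⁻¹ z) = 0 := by simp only [d2, hwa, hwb, or_self, ↓reduceIte]
    rw [hd]
    refine merge a b z ⊤ _ g (Equiv.swap (g.1⁻¹ z) z, 1)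
      (mem_Hprime.2 (Or.inl ⟨rfl, ?_, ?_⟩)) ?_ (Subgroup.mem_top _)
    · exact Equiv.swap_apply_of_ne_of_ne (fun h => hwa h.symm) haz
    · exact Equiv.swap_apply_of_ne_of_ne (fun h => hwb h.symm) hbz
    · simp [r2]

lemma card3 {p : ℕ} {a b z : Fin p} (hab : a ≠ b) (haz : a ≠ z) (hbz : b ≠ z) :
    Nat.card (DoubleCoset.Quotient
      (((MulAction.stabilizer (Equiv.Perm (Fin p)) z).prod
          (⊥ : Subgroup (Multiplicative (ZMod 2)))) : Set (Gp p))
      ((Hprime p a b) : Set (Gp p))) = 3 := by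
  apply Nat.card_eq_of_equiv_fin
  refine ⟨Quotient.lift (fun g : Gp p => d3 a b (g.1⁻¹ z) g.2) ?_,
    fun i => DoubleCoset.mk _ _ (r3 z a i), ?_, ?_⟩
  · intro x y hxy
    obtain ⟨α, hα, k, hk, rfl⟩ := DoubleCoset.rel_iff.1 hxy
    obtain ⟨hα1, hα2⟩ := Subgroup.mem_prod.1 hα
    rw [Subgroup.mem_bot] at hα2
    rw [MulAction.mem_stabilizer_iff] at hα1
    have hα1' : α.1 z = z := hα1
    have e1 : (α * x * k).1⁻¹ z = k.1⁻¹ (x.1⁻¹ z) := by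
      have hz : α.1⁻¹ z = z := Equiv.Perm.inv_eq_iff_eq.mpr hα1'.symm
      show (α.1 * x.1 * k.1)⁻¹ z = _
      rw [mul_inv_rev, mul_inv_rev]
      simp [Equiv.Perm.mul_apply, hz]
    have e2 : (α * x * k).2 = x.2 * k.2 := by
      show α.2 * x.2 * k.2 = _
      rw [hα2, one_mul]
    show d3 a b (x.1⁻¹ z) x.2 = d3 a b ((α * x * k).1⁻¹ z) (α * x * k).2
    rw [e1, e2, d3_inv hab _ _ hk]
  · intro q
    exact Quotient.inductionOn' q fun g => mk_rep3 hab haz hbz g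
  · intro i
    fin_cases i
    · show d3 a b ((1 : Equiv.Perm (Fin p))⁻¹ z) 1 = 0
      simp [d3, Ne.symm haz, Ne.symm hbz]
    · show d3 a b ((Equiv.swap z a)⁻¹ z) 1 = 1
      simp [d3, Equiv.swap_inv, Equiv.swap_apply_left]
    · show d3 a b ((Equiv.swap z a)⁻¹ z) (Multiplicative.ofAdd 1) = 2
      simp [d3, Equiv.swap_inv, Equiv.swap_apply_left, ofAdd_ne_one]

lemma card2 {p : ℕ} {a b z : Fin p} (hab : a ≠ b) (haz : a ≠ z) (hbz : b ≠ z) :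
    Nat.card (DoubleCoset.Quotient
      (((MulAction.stabilizer (Equiv.Perm (Fin p)) z).prod
          (⊤ : Subgroup (Multiplicative (ZMod 2)))) : Set (Gp p))
      ((Hprime p a b) : Set (Gp p))) = 2 := by
  apply Nat.card_eq_of_equiv_fin
  refine ⟨Quotient.lift (fun g : Gp p => d2 a b (g.1⁻¹ z)) ?_,
    fun i => DoubleCoset.mk _ _ (r2 z a i), ?_, ?_⟩
  · intro x y hxy
    obtain ⟨α, hα, k, hk, rfl⟩ := DoubleCoset.rel_iff.1 hxy
    obtain ⟨hα1, _⟩ := Subgroup.mem_prod.1 hα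
    rw [MulAction.mem_stabilizer_iff] at hα1
    have hα1' : α.1 z = z := hα1
    have e1 : (α * x * k).1⁻¹ z = k.1⁻¹ (x.1⁻¹ z) := by
      have hz : α.1⁻¹ z = z := Equiv.Perm.inv_eq_iff_eq.mpr hα1'.symm
      show (α.1 * x.1 * k.1)⁻¹ z = _
      rw [mul_inv_rev, mul_inv_rev]
      simp [Equiv.Perm.mul_apply, hz]
    show d2 a b (x.1⁻¹ z) = d2 a b ((α * x * k).1⁻¹ z)
    rw [e1, d2_inv hab _ hk]
  · intro q
    exact Quotient.inductionOn' q fun g => mk_rep2 hab haz hbz g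
  · intro i
    fin_cases i
    · show d2 a b ((1 : Equiv.Perm (Fin p))⁻¹ z) = 0
      simp [d2, Ne.symm haz, Ne.symm hbz]
    · show d2 a b ((Equiv.swap z a)⁻¹ z) = 1
      simp [d2, Equiv.swap_inv, Equiv.swap_apply_left]

lemma card1 {p : ℕ} (a b : Fin p) :
    Nat.card (DoubleCoset.Quotient
      (((⊤ : Subgroup (Equiv.Perm (Fin p))).prod
          (⊥ : Subgroup (Multiplicative (ZMod 2)))) : Set (Gp p))
      ((Hprime p a b) : Set (Gp p))) = 1 := by
  have key : ∀ g : Gp p,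
      DoubleCoset.mk ((⊤ : Subgroup (Equiv.Perm (Fin p))).prod ⊥) (Hprime p a b) (1 : Gp p)
        = DoubleCoset.mk ((⊤ : Subgroup (Equiv.Perm (Fin p))).prod ⊥) (Hprime p a b) g := by
    intro g
    rw [DoubleCoset.eq]
    rcases two_cases g.2 with hu | hu
    · exact ⟨g, Subgroup.mem_prod.2 ⟨trivial, Subgroup.mem_bot.2 hu⟩, 1, one_mem _, by simp⟩
    · refine ⟨(g.1 * Equiv.swap a b, 1), Subgroup.mem_prod.2 ⟨trivial, Subgroup.mem_bot.2 rfl⟩,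
        (Equiv.swap a b, Multiplicative.ofAdd 1),
        mem_Hprime.2 (Or.inr ⟨rfl, Equiv.swap_apply_left a b, Equiv.swap_apply_right a b⟩), ?_⟩
      refine Prod.ext ?_ ?_
      · show g.1 = g.1 * Equiv.swap a b * 1 * Equiv.swap a b
        rw [mul_one, mul_assoc, Equiv.swap_mul_self, mul_one]
      · show g.2 = 1 * 1 * Multiplicative.ofAdd 1
        rw [hu, one_mul, one_mul]
  rw [Nat.card_eq_one_iff_unique]
  constructor
  · constructor
    intro q q'
    exact Quotient.inductionOn₂' q q' fun x y => ((key x).symm.trans (key y))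
  · exact ⟨DoubleCoset.mk _ _ 1⟩

/-- For `G = Sₚ × C₂`, `A₁ = Sₚ×{0}`, `A₂ = Stab(1)×C₂`, `A₃ = Stab(1)×{0}` and `H'` as above:
`#(A₁\G/H') = 1`, `#(A₂\G/H') = 2` and `#(A₃\G/H') = 3`. -/
theorem double_coset_counts_subgroups (p : ℕ) (hp : p.Prime) (hodd : Odd p)
    (a b : Fin p) (ha : (a : ℕ) = p - 2) (hb : (b : ℕ) = p - 1) :
    Nat.card (DoubleCoset.Quotient
        (((⊤ : Subgroup (Equiv.Perm (Fin p))).prod (⊥ : Subgroup (Multiplicative (ZMod 2)))) :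
            Set (Equiv.Perm (Fin p) × Multiplicative (ZMod 2)))
        ((Hprime p a b) : Set (Equiv.Perm (Fin p) × Multiplicative (ZMod 2)))) = 1 ∧
    Nat.card (DoubleCoset.Quotient
        (((MulAction.stabilizer (Equiv.Perm (Fin p)) (⟨0, hp.pos⟩ : Fin p)).prod
            (⊤ : Subgroup (Multiplicative (ZMod 2)))) :
            Set (Equiv.Perm (Fin p) × Multiplicative (ZMod 2)))
        ((Hprime p a b) : Set (Equiv.Perm (Fin p) × Multiplicative (ZMod 2)))) = 2 ∧
    Nat.card (DoubleCoset.Quotient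
        (((MulAction.stabilizer (Equiv.Perm (Fin p)) (⟨0, hp.pos⟩ : Fin p)).prod
            (⊥ : Subgroup (Multiplicative (ZMod 2)))) :
            Set (Equiv.Perm (Fin p) × Multiplicative (ZMod 2)))
        ((Hprime p a b) : Set (Equiv.Perm (Fin p) × Multiplicative (ZMod 2)))) = 3 := by
  have hp3 : 3 ≤ p := by
    have h2 := hp.two_le
    have ho := Nat.odd_iff.1 hodd
    omega
  set z : Fin p := ⟨0, hp.pos⟩ with hz
  have hzv : (z : ℕ) = 0 := rfl
  have hab : a ≠ b := fun h => by
    have := congrArg Fin.val h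
    omega
  have haz : a ≠ z := fun h => by
    have := congrArg Fin.val h
    omega
  have hbz : b ≠ z := fun h => by
    have := congrArg Fin.val h
    omega
  exact ⟨card1 a b, card2 hab haz hbz, card3 hab haz hbz⟩
end
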